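/- Let $G$ be a graph on $n$ vertices with $e \geq 1$ edges and degree sequence $d_1,\dots,d_n$. Then for any tree $T_m$ on $m \geq 2$ vertices, $\hom(T_m, G) \geq 2e \cdot C^{m-2}$ where $C = \left(\prod_{i=1}^n d_i^{d_i}\right)^{1/(2e)}$. -/

import Mathlib

open Finset

private lemma sum_update' {V W : Type*} [Fintype V] [Fintype W] [DecidableEq V]
    (k : V) (Ψ : (V → W) → ℝ) :
    ∑ g : V → W, ∑ x : W, Ψ (Function.update g k x)
      = (Fintype.card W : ℝ) * ∑ g : V → W, Ψ g := by
  classical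
  have hbij : Function.Bijective
      (fun p : (V → W) × W => (Function.update p.1 k p.2, p.1 k)) := by
    apply Function.Involutive.bijective
    rintro ⟨g, x⟩
    simp [Function.update_idem]
  calc ∑ g : V → W, ∑ x : W, Ψ (Function.update g k x)
      = ∑ p : (V → W) × W, Ψ (Function.update p.1 k p.2) := by
        rw [Fintype.sum_prod_type]
    _ = ∑ p : (V → W) × W, Ψ p.1 :=
        Fintype.sum_bijective _ hbij _ _ (fun p => rfl)
    _ = (Fintype.card W : ℝ) * ∑ g : V → W, Ψ g := by
        rw [Fintype.sum_prod_type]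
        simp only [Finset.sum_const, Finset.card_univ, nsmul_eq_mul]
        rw [← Finset.mul_sum]

private lemma rpow_sum' {ι : Type*} (x : ℝ) (hx : 0 < x) (s : Finset ι) (t : ι → ℝ) :
    x ^ (∑ i ∈ s, t i) = ∏ i ∈ s, x ^ t i := by
  induction s using Finset.cons_induction with
  | empty => simp
  | cons a s ha ih => rw [Finset.sum_cons, Finset.prod_cons, Real.rpow_add hx, ih]

private lemma prod_rpow_fiber {V W : Type*} [Fintype V] [Fintype W] [DecidableEq V] [DecidableEq W]
    (j : V) (y : W → ℝ) (hy : ∀ w, 0 ≤ y w) (q : (V → W) → ℝ)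
    (h0 : ∀ g, q g ≠ 0 → y (g j) ≠ 0) :
    ∏ g : V → W, y (g j) ^ q g
      = ∏ w : W, y w ^ (∑ g : V → W, if g j = w then q g else 0) := by
  classical
  rw [← Finset.prod_fiberwise Finset.univ (fun g : V → W => g j)
      (fun g => y (g j) ^ q g)]
  apply Finset.prod_congr rfl
  intro w _
  have h1 : ∀ g ∈ Finset.univ.filter (fun g : V → W => g j = w),
      y (g j) ^ q g = y w ^ q g := by
    intro g hg
    rw [(Finset.mem_filter.mp hg).2]
  rw [Finset.prod_congr rfl h1]
  have h2 : (∑ g : V → W, if g j = w then q g else 0)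
      = ∑ g ∈ Finset.univ.filter (fun g : V → W => g j = w), q g := by
    rw [Finset.sum_filter]
  rw [h2]
  rcases (hy w).lt_or_eq with hw | hw
  · exact (rpow_sum' _ hw _ _).symm
  · -- y w = 0; all q g in the fiber are 0
    have : ∀ g ∈ Finset.univ.filter (fun g : V → W => g j = w), q g = 0 := by
      intro g hg
      by_contra hq
      exact (h0 g hq) (by rw [(Finset.mem_filter.mp hg).2, ← hw])
    rw [Finset.sum_eq_zero this, Finset.prod_congr rfl (fun g hg => by rw [this g hg])]
    simp


private lemma tree_struct {V : Type*} [Fintype V] (T : SimpleGraph V) (hT : T.IsTree) :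
    ∃ (r : V) (pr : V → V) (N : V → ℕ), pr r = r ∧
      (∀ v, v ≠ r → N (pr v) < N v ∧ T.Adj (pr v) v) ∧
      (∀ a b, T.Adj a b → ∃ v, v ≠ r ∧ ((pr v = a ∧ v = b) ∨ (pr v = b ∧ v = a))) := by
  classical
  have hconn : T.Connected := hT.isConnected
  have : Nonempty V := hconn.nonempty
  obtain ⟨r⟩ := this
  have key : ∀ v : V, v ≠ r → ∃ u, T.Adj u v ∧ T.dist r u < T.dist r v := by
    intro v hv
    obtain ⟨p, hp⟩ := hconn.exists_walk_length_eq_dist r v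
    obtain ⟨u, h, q, hq⟩ := SimpleGraph.Walk.exists_eq_cons_of_ne hv p.reverse
    refine ⟨u, h.symm, ?_⟩
    have h1 : T.dist r u ≤ q.reverse.length := SimpleGraph.dist_le _
    have h2 : q.reverse.length + 1 = T.dist r v := by
      have := congrArg SimpleGraph.Walk.length hq
      simp only [SimpleGraph.Walk.length_reverse, SimpleGraph.Walk.length_cons] at this ⊢
      omega
    omega
  set pr : V → V := fun v => if hv : v = r then r else (key v hv).choose with hpr_def
  have hprr : pr r = r := by simp [hpr_def]
  have hdec : ∀ v, v ≠ r → T.dist r (pr v) < T.dist r v ∧ T.Adj (pr v) v := by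
    intro v hv
    have h := (key v hv).choose_spec
    simp only [hpr_def, dif_neg hv]
    exact ⟨h.2, h.1⟩
  refine ⟨r, pr, fun v => T.dist r v, hprr, fun v hv => ⟨(hdec v hv).1, (hdec v hv).2⟩, ?_⟩
  -- every edge is a parent edge, by counting
  have hsub : (Finset.univ.erase r).image (fun v => s(pr v, v)) ⊆ T.edgeFinset := by
    intro e he
    obtain ⟨v, hv, rfl⟩ := Finset.mem_image.mp he
    rw [SimpleGraph.mem_edgeFinset, SimpleGraph.mem_edgeSet]
    exact (hdec v (Finset.mem_erase.mp hv).1).2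
  have hinj : Set.InjOn (fun v => s(pr v, v)) (Finset.univ.erase r) := by
    intro v1 h1 v2 h2 hee
    have h1' : v1 ≠ r := (Finset.mem_erase.mp (by exact_mod_cast h1)).1
    have h2' : v2 ≠ r := (Finset.mem_erase.mp (by exact_mod_cast h2)).1
    rcases Sym2.eq_iff.mp hee with ⟨-, h⟩ | ⟨ha, hb⟩
    · exact h
    · exfalso
      have d1 := (hdec v1 h1').1
      have d2 := (hdec v2 h2').1
      rw [ha] at d1; rw [← hb] at d2
      omega
  have hcard : ((Finset.univ.erase r).image (fun v => s(pr v, v))).card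
      = T.edgeFinset.card := by
    rw [Finset.card_image_of_injOn hinj, Finset.card_erase_of_mem (Finset.mem_univ r),
      Finset.card_univ]
    have := hT.card_edgeFinset
    omega
  have heq : (Finset.univ.erase r).image (fun v => s(pr v, v)) = T.edgeFinset :=
    Finset.eq_of_subset_of_card_le hsub (le_of_eq hcard.symm)
  intro a b hab
  have : s(a, b) ∈ T.edgeFinset := by
    rw [SimpleGraph.mem_edgeFinset, SimpleGraph.mem_edgeSet]; exact hab
  rw [← heq] at this
  obtain ⟨v, hv, hve⟩ := Finset.mem_image.mp this
  refine ⟨v, (Finset.mem_erase.mp hv).1, ?_⟩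
  rcases Sym2.eq_iff.mp hve with h | h
  · exact Or.inl h
  · exact Or.inr h

section
variable {V W : Type*} [Fintype V] [Fintype W] [DecidableEq V] [DecidableEq W]

private noncomputable def wgt (G : SimpleGraph W) [DecidableRel G.Adj]
    (r : V) (pr : V → V) (v : V) (g : V → W) : ℝ :=
  if v = r then (G.degree (g r) : ℝ) / (2 * G.edgeFinset.card)
  else if G.Adj (g (pr v)) (g v) then ((G.degree (g (pr v)) : ℝ))⁻¹ else 0

variable (G : SimpleGraph W) [DecidableRel G.Adj] (r : V) (pr : V → V)

private lemma wgt_nonneg (v : V) (g : V → W) : 0 ≤ wgt G r pr v g := by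
  unfold wgt; split_ifs <;> positivity

private lemma wgt_deg_pos {u : V} {g : V → W} (h : wgt G r pr u g ≠ 0) :
    0 < G.degree (g u) := by
  unfold wgt at h
  split_ifs at h with h1 h2
  · rw [h1]
    rw [div_ne_zero_iff] at h
    exact Nat.pos_of_ne_zero (by exact_mod_cast h.1)
  · exact (SimpleGraph.degree_pos_iff_exists_adj G _).mpr ⟨_, h2.symm⟩
  · exact absurd rfl h

private lemma wgt_adj {u : V} {g : V → W} (hu : u ≠ r) (h : wgt G r pr u g ≠ 0) :
    G.Adj (g (pr u)) (g u) := by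
  unfold wgt at h
  rw [if_neg hu] at h
  split_ifs at h with h2
  · exact h2
  · exact absurd rfl h

private lemma wgt_update {u v : V} (g : V → W) (x : W) (hu : u ≠ v) (hpu : pr u ≠ v)
    (hr : r ≠ v) : wgt G r pr u (Function.update g v x) = wgt G r pr u g := by
  unfold wgt
  rw [Function.update_of_ne hr, Function.update_of_ne hpu, Function.update_of_ne hu]

private lemma cancel_aux (x Y : ℝ) (hx : x ≠ 0) (k : ℕ) :
    x⁻¹ * (x ^ k * x * Y) = x ^ k * Y := by
  calc x⁻¹ * (x ^ k * x * Y) = (x⁻¹ * x) * (x ^ k * Y) := by ring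
    _ = x ^ k * Y := by rw [inv_mul_cancel₀ hx, one_mul]

private lemma master (he : 0 < G.edgeFinset.card)
    (N : V → ℕ) (hprr : pr r = r) (hdec : ∀ v, v ≠ r → N (pr v) < N v)
    (S : Finset V) (hrS : r ∈ S) (hcl : ∀ v ∈ S, pr v ∈ S) :
    ∀ j ∈ S, ∀ w : W,
      (∑ g : V → W, if g j = w then ∏ v ∈ S, wgt G r pr v g else 0)
        = (Fintype.card W : ℝ) ^ (Sᶜ.card) * (G.degree w / (2 * G.edgeFinset.card)) := by
  have h2e : (0:ℝ) < 2 * G.edgeFinset.card := by positivity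
  have hWne : Nonempty W := by
    obtain ⟨e, heW⟩ := Finset.card_pos.mp he
    obtain ⟨a, b⟩ := e
    exact ⟨a⟩
  have hcW : (0:ℝ) < Fintype.card W := by
    exact_mod_cast Fintype.card_pos_iff.mpr hWne
  revert hrS hcl
  induction S using Finset.strongInduction with
  | _ S ih =>
  intro hrS hcl j hjS w
  by_cases hS1 : S = {r}
  · -- base case
    have hj : j = r := by rw [hS1] at hjS; exact Finset.mem_singleton.mp hjS
    rw [hS1, hj]
    set Ψ : (V → W) → ℝ :=
      fun g => if g r = w then ∏ v ∈ ({r} : Finset V), wgt G r pr v g else 0 with hΨ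
    have hkey : (Fintype.card W : ℝ) * ∑ g : V → W, Ψ g
        = (Fintype.card W : ℝ) ^ (Fintype.card V)
            * (G.degree w / (2 * G.edgeFinset.card)) := by
      rw [← sum_update' r Ψ]
      have h1 : ∀ g : V → W, ∑ x : W, Ψ (Function.update g r x)
          = (G.degree w : ℝ) / (2 * G.edgeFinset.card) := by
        intro g
        have h2 : ∀ x : W, Ψ (Function.update g r x)
            = if x = w then (G.degree x : ℝ) / (2 * G.edgeFinset.card) else 0 := by
          intro x
          simp only [hΨ, Finset.prod_singleton]
          unfold wgt
          rw [Function.update_self]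
          simp
        rw [Finset.sum_congr rfl fun x _ => h2 x]
        simp
      rw [Finset.sum_congr rfl fun g _ => h1 g]
      rw [Finset.sum_const, Finset.card_univ, Fintype.card_fun, nsmul_eq_mul]
      push_cast
      ring
    have hVpos : 1 ≤ Fintype.card V := Fintype.card_pos_iff.mpr ⟨r⟩
    have hcompl : ({r} : Finset V)ᶜ.card = Fintype.card V - 1 := by
      rw [Finset.card_compl, Finset.card_singleton]
    have hsolve : ∑ g : V → W, Ψ g = (Fintype.card W : ℝ)⁻¹
        * ((Fintype.card W : ℝ) * ∑ g : V → W, Ψ g) := by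
      field_simp
    obtain ⟨k, hk⟩ : ∃ k, Fintype.card V = k + 1 := ⟨Fintype.card V - 1, by omega⟩
    have hck : ({r} : Finset V)ᶜ.card = k := by omega
    have hxne : (Fintype.card W : ℝ) ≠ 0 := hcW.ne'
    rw [show (∑ g : V → W, if g r = w then ∏ v ∈ ({r} : Finset V), wgt G r pr v g else 0)
        = ∑ g : V → W, Ψ g from rfl, hsolve, hkey, hck, hk, pow_succ]
    exact cancel_aux _ _ hxne _
  · -- inductive step
    have hex : ∃ v ∈ S, v ≠ r := by
      by_contra hcon
      push_neg at hcon
      exact hS1 (Finset.eq_singleton_iff_unique_mem.mpr ⟨hrS, fun x hx => hcon x hx⟩)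
    have hne : (S.erase r).Nonempty := by
      obtain ⟨v, hv, hvr⟩ := hex
      exact ⟨v, Finset.mem_erase.mpr ⟨hvr, hv⟩⟩
    obtain ⟨v, hvmem, hvmax⟩ := Finset.exists_max_image (S.erase r) N hne
    have hvS : v ∈ S := (Finset.mem_erase.mp hvmem).2
    have hvr : v ≠ r := (Finset.mem_erase.mp hvmem).1
    set S' := S.erase v with hS'
    have hrS' : r ∈ S' := Finset.mem_erase.mpr ⟨Ne.symm hvr, hrS⟩
    have hprv : pr v ∈ S' := by
      refine Finset.mem_erase.mpr ⟨?_, hcl v hvS⟩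
      intro hcon
      have h1 := hdec v hvr
      rw [hcon] at h1
      exact lt_irrefl _ h1
    have hcl' : ∀ u ∈ S', pr u ∈ S' := by
      intro u huS'
      have huS : u ∈ S := (Finset.mem_erase.mp huS').2
      refine Finset.mem_erase.mpr ⟨?_, hcl u huS⟩
      by_cases hur : u = r
      · rw [hur, hprr]; exact Ne.symm hvr
      · intro hcon
        have h1 := hdec u hur
        have h2 := hvmax u (Finset.mem_erase.mpr ⟨hur, huS⟩)
        rw [hcon] at h1
        omega
    have hvS' : v ∉ S' := Finset.notMem_erase v S
    have hSins : S = insert v S' := (Finset.insert_erase hvS).symm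
    have hsub : S' ⊂ S := Finset.erase_ssubset hvS
    have ihS' := ih S' hsub hrS' hcl'
    -- ancillary facts
    have hprod : ∀ g : V → W, ∏ u ∈ S, wgt G r pr u g
        = wgt G r pr v g * ∏ u ∈ S', wgt G r pr u g := by
      intro g; rw [hSins, Finset.prod_insert hvS']
    have hPupd : ∀ (g : V → W) (x : W),
        (∏ u ∈ S', wgt G r pr u (Function.update g v x)) = ∏ u ∈ S', wgt G r pr u g := by
      intro g x
      refine Finset.prod_congr rfl fun u huS' => ?_
      refine wgt_update G r pr g x (Finset.mem_erase.mp huS').1 ?_ (Ne.symm hvr)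
      exact (Finset.mem_erase.mp (hcl' u huS')).1
    have hwgtv : ∀ (g : V → W) (x : W), wgt G r pr v (Function.update g v x)
        = if G.Adj (g (pr v)) x then ((G.degree (g (pr v)) : ℝ))⁻¹ else 0 := by
      intro g x
      have hprvv : pr v ≠ v := (Finset.mem_erase.mp hprv).1
      unfold wgt
      rw [if_neg hvr, Function.update_of_ne hprvv, Function.update_self]
    have hsupp : ∀ g : V → W, (∏ u ∈ S', wgt G r pr u g) ≠ 0 → 0 < G.degree (g (pr v)) := by
      intro g hg
      have := Finset.prod_ne_zero_iff.mp hg (pr v) hprv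
      exact wgt_deg_pos G r pr this
    have hsum_phi : ∀ a : W, 0 < G.degree a →
        (∑ x : W, if G.Adj a x then ((G.degree a : ℝ))⁻¹ else 0) = 1 := by
      intro a ha
      rw [← Finset.sum_filter]
      rw [Finset.sum_const]
      have : Finset.univ.filter (fun x => G.Adj a x) = G.neighborFinset a := by
        ext x; simp [SimpleGraph.mem_neighborFinset]
      rw [this, SimpleGraph.card_neighborFinset_eq_degree, nsmul_eq_mul]
      have : (G.degree a : ℝ) ≠ 0 := by positivity
      field_simp
    have hcc : S'ᶜ.card = Sᶜ.card + 1 := by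
      have h1 : S'ᶜ = insert v Sᶜ := by
        rw [hS', Finset.compl_erase]
      rw [h1, Finset.card_insert_of_notMem (by simp [hvS])]
    rw [hSins] at hjS
    rcases Finset.mem_insert.mp hjS with hjv | hjS'
    · -- j = v
      rw [hjv]
      set Ψ : (V → W) → ℝ :=
        fun g => if g v = w then ∏ u ∈ S, wgt G r pr u g else 0 with hΨ
      have hkey : (Fintype.card W : ℝ) * ∑ g : V → W, Ψ g
          = (Fintype.card W : ℝ) ^ (S'ᶜ.card) * (G.degree w / (2 * G.edgeFinset.card)) := by
        rw [← sum_update' v Ψ]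
        have h1 : ∀ g : V → W, ∑ x : W, Ψ (Function.update g v x)
            = (if G.Adj (g (pr v)) w then ((G.degree (g (pr v)) : ℝ))⁻¹ else 0)
              * ∏ u ∈ S', wgt G r pr u g := by
          intro g
          have h2 : ∀ x : W, Ψ (Function.update g v x)
              = if x = w then (if G.Adj (g (pr v)) x then ((G.degree (g (pr v)) : ℝ))⁻¹ else 0)
                  * ∏ u ∈ S', wgt G r pr u g else 0 := by
            intro x
            simp only [hΨ, Function.update_self]
            rw [hprod (Function.update g v x), hPupd g x, hwgtv g x]
          rw [Finset.sum_congr rfl fun x _ => h2 x]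
          rw [Finset.sum_ite_eq' Finset.univ w _]
          simp
        rw [Finset.sum_congr rfl fun g _ => h1 g]
        -- group by the value of g (pr v)
        have h3 : ∀ g : V → W,
            (if G.Adj (g (pr v)) w then ((G.degree (g (pr v)) : ℝ))⁻¹ else 0)
              * ∏ u ∈ S', wgt G r pr u g
            = ∑ w' : W, if g (pr v) = w'
                then (if G.Adj w' w then ((G.degree w' : ℝ))⁻¹ else 0)
                  * ∏ u ∈ S', wgt G r pr u g else 0 := by
          intro g
          rw [Finset.sum_ite_eq Finset.univ (g (pr v)) _]
          simp
        rw [Finset.sum_congr rfl fun g _ => h3 g, Finset.sum_comm]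
        have h4 : ∀ w' : W,
            (∑ g : V → W, if g (pr v) = w'
                then (if G.Adj w' w then ((G.degree w' : ℝ))⁻¹ else 0)
                  * ∏ u ∈ S', wgt G r pr u g else 0)
            = (if G.Adj w' w then ((G.degree w' : ℝ))⁻¹ else 0)
              * ((Fintype.card W : ℝ) ^ (S'ᶜ.card)
                  * (G.degree w' / (2 * G.edgeFinset.card))) := by
          intro w'
          rw [← ihS' (pr v) hprv w', Finset.mul_sum]
          refine Finset.sum_congr rfl fun g _ => ?_
          rw [mul_ite, mul_zero]
        rw [Finset.sum_congr rfl fun w' _ => h4 w']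
        have h5 : ∀ w' : W,
            (if G.Adj w' w then ((G.degree w' : ℝ))⁻¹ else 0)
              * ((Fintype.card W : ℝ) ^ (S'ᶜ.card)
                  * (G.degree w' / (2 * G.edgeFinset.card)))
            = (Fintype.card W : ℝ) ^ (S'ᶜ.card) * (2 * (G.edgeFinset.card : ℝ))⁻¹
                * (if G.Adj w w' then 1 else 0) := by
          intro w'
          by_cases hadj : G.Adj w' w
          · have hdpos : 0 < G.degree w' :=
              SimpleGraph.degree_pos_iff_exists_adj G w' |>.mpr ⟨w, hadj⟩
            have : (G.degree w' : ℝ) ≠ 0 := by positivity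
            rw [if_pos hadj, if_pos (G.adj_symm hadj)]
            rw [mul_one, div_eq_mul_inv]
            calc _ = ((G.degree w' : ℝ)⁻¹ * (G.degree w' : ℝ)) * ((Fintype.card W : ℝ) ^ (S'ᶜ.card) * (2 * (G.edgeFinset.card : ℝ))⁻¹) := by ring
              _ = _ := by rw [inv_mul_cancel₀ this, one_mul]
          · rw [if_neg hadj, if_neg (fun h => hadj (G.adj_symm h))]
            ring
        rw [Finset.sum_congr rfl fun w' _ => h5 w']
        rw [← Finset.mul_sum, ← Finset.sum_filter]
        have : Finset.univ.filter (fun x => G.Adj w x) = G.neighborFinset w := by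
          ext x; simp [SimpleGraph.mem_neighborFinset]
        rw [this, Finset.sum_const, SimpleGraph.card_neighborFinset_eq_degree, nsmul_eq_mul,
          mul_one]
        ring
      have hsolve : ∑ g : V → W, Ψ g = (Fintype.card W : ℝ)⁻¹
          * ((Fintype.card W : ℝ) * ∑ g : V → W, Ψ g) := by
        field_simp
      rw [show (∑ g : V → W, if g v = w then ∏ u ∈ S, wgt G r pr u g else 0)
          = ∑ g : V → W, Ψ g from rfl, hsolve, hkey, hcc, pow_succ]
      exact cancel_aux _ _ hcW.ne' _
    · -- j ∈ S'
      set Ψ : (V → W) → ℝ :=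
        fun g => if g j = w then ∏ u ∈ S, wgt G r pr u g else 0 with hΨ
      have hjv : j ≠ v := fun h => hvS' (h ▸ hjS')
      have hkey : (Fintype.card W : ℝ) * ∑ g : V → W, Ψ g
          = (Fintype.card W : ℝ) ^ (S'ᶜ.card) * (G.degree w / (2 * G.edgeFinset.card)) := by
        rw [← sum_update' v Ψ]
        have h1 : ∀ g : V → W, ∑ x : W, Ψ (Function.update g v x)
            = if g j = w then ∏ u ∈ S', wgt G r pr u g else 0 := by
          intro g
          have h2 : ∀ x : W, Ψ (Function.update g v x)
              = if g j = w then (if G.Adj (g (pr v)) x then ((G.degree (g (pr v)) : ℝ))⁻¹ else 0)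
                  * ∏ u ∈ S', wgt G r pr u g else 0 := by
            intro x
            simp only [hΨ, Function.update_of_ne hjv]
            rw [hprod (Function.update g v x), hPupd g x, hwgtv g x]
          rw [Finset.sum_congr rfl fun x _ => h2 x]
          by_cases hgw : g j = w
          · simp only [if_pos hgw]
            rw [← Finset.sum_mul]
            by_cases hP : (∏ u ∈ S', wgt G r pr u g) = 0
            · rw [hP, mul_zero]
            · rw [hsum_phi (g (pr v)) (hsupp g hP), one_mul]
          · simp only [if_neg hgw]
            simp
        rw [Finset.sum_congr rfl fun g _ => h1 g]
        exact ihS' j hjS' w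
      have hsolve : ∑ g : V → W, Ψ g = (Fintype.card W : ℝ)⁻¹
          * ((Fintype.card W : ℝ) * ∑ g : V → W, Ψ g) := by
        field_simp
      rw [show (∑ g : V → W, if g j = w then ∏ u ∈ S, wgt G r pr u g else 0)
          = ∑ g : V → W, Ψ g from rfl, hsolve, hkey, hcc, pow_succ]
      exact cancel_aux _ _ hcW.ne' _

private lemma wgt_r_eq (g : V → W) :
    wgt G r pr r g = (G.degree (g r) : ℝ) / (2 * G.edgeFinset.card) := if_pos rfl

private lemma wgt_ne_eq {v : V} (hv : v ≠ r) (g : V → W) :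
    wgt G r pr v g
      = if G.Adj (g (pr v)) (g v) then ((G.degree (g (pr v)) : ℝ))⁻¹ else 0 := if_neg hv

private lemma master_univ (he : 0 < G.edgeFinset.card)
    (N : V → ℕ) (hprr : pr r = r) (hdec : ∀ v, v ≠ r → N (pr v) < N v)
    (j : V) (w : W) :
    (∑ g : V → W, if g j = w then ∏ v, wgt G r pr v g else 0)
      = G.degree w / (2 * G.edgeFinset.card) := by
  have h := master G r pr he N hprr hdec Finset.univ (Finset.mem_univ r)
    (fun v _ => Finset.mem_univ _) j (Finset.mem_univ j) w
  rwa [Finset.compl_univ, Finset.card_empty, pow_zero, one_mul] at h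

private lemma master_total (he : 0 < G.edgeFinset.card)
    (N : V → ℕ) (hprr : pr r = r) (hdec : ∀ v, v ≠ r → N (pr v) < N v) :
    (∑ g : V → W, ∏ v, wgt G r pr v g) = 1 := by
  have h2e : (0:ℝ) < 2 * G.edgeFinset.card := by positivity
  have h1 : ∀ g : V → W, (∏ v, wgt G r pr v g)
      = ∑ w : W, if g r = w then ∏ v, wgt G r pr v g else 0 := by
    intro g
    rw [Finset.sum_ite_eq Finset.univ (g r) (fun _ => ∏ v, wgt G r pr v g)]
    simp
  rw [Finset.sum_congr rfl fun g _ => h1 g, Finset.sum_comm]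
  rw [Finset.sum_congr rfl fun w _ => master_univ G r pr he N hprr hdec r w]
  rw [← Finset.sum_div]
  have : ∑ w : W, (G.degree w : ℝ) = 2 * G.edgeFinset.card := by
    rw [← Nat.cast_sum]
    rw [SimpleGraph.sum_degrees_eq_twice_card_edges]
    push_cast
    ring
  rw [this, div_self h2e.ne']

private lemma entropy_prod (he : 0 < G.edgeFinset.card)
    (N : V → ℕ) (hprr : pr r = r) (hdec : ∀ v, v ≠ r → N (pr v) < N v) :
    ∏ g : V → W, (∏ v, wgt G r pr v g) ^ (∏ v, wgt G r pr v g)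
      = (∏ w, (G.degree w : ℝ) ^ ((G.degree w : ℝ) / (2 * G.edgeFinset.card)))
          * (2 * (G.edgeFinset.card : ℝ))⁻¹
          * ((∏ w, (G.degree w : ℝ) ^ ((G.degree w : ℝ) / (2 * G.edgeFinset.card)))⁻¹)
              ^ (Fintype.card V - 1) := by
  have h2e : (0:ℝ) < 2 * G.edgeFinset.card := by positivity
  set Q : ℝ := ∏ w, (G.degree w : ℝ) ^ ((G.degree w : ℝ) / (2 * G.edgeFinset.card)) with hQ
  set q : (V → W) → ℝ := fun g => ∏ v, wgt G r pr v g with hq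
  have hq0 : ∀ g, 0 ≤ q g := fun g => Finset.prod_nonneg fun v _ => wgt_nonneg G r pr v g
  have htsum : ∑ w : W, (G.degree w : ℝ) / (2 * G.edgeFinset.card) = 1 := by
    rw [← Finset.sum_div]
    have : ∑ w : W, (G.degree w : ℝ) = 2 * G.edgeFinset.card := by
      rw [← Nat.cast_sum, SimpleGraph.sum_degrees_eq_twice_card_edges]
      push_cast; ring
    rw [this, div_self h2e.ne']
  have step1 : ∀ g : V → W, (q g) ^ (q g) = ∏ v, (wgt G r pr v g) ^ (q g) := fun g =>
    (Real.finset_prod_rpow _ _ (fun v _ => wgt_nonneg G r pr v g) _).symm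
  calc ∏ g : V → W, (q g) ^ (q g)
      = ∏ g : V → W, ∏ v, (wgt G r pr v g) ^ (q g) :=
        Finset.prod_congr rfl fun g _ => step1 g
    _ = ∏ v, ∏ g : V → W, (wgt G r pr v g) ^ (q g) := Finset.prod_comm
    _ = (∏ g : V → W, (wgt G r pr r g) ^ (q g))
          * ∏ v ∈ Finset.univ.erase r, ∏ g : V → W, (wgt G r pr v g) ^ (q g) :=
        (Finset.mul_prod_erase Finset.univ _ (Finset.mem_univ r)).symm
    _ = Q * (2 * (G.edgeFinset.card : ℝ))⁻¹ * (Q⁻¹) ^ (Fintype.card V - 1) := by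
        have hroot : (∏ g : V → W, (wgt G r pr r g) ^ (q g))
            = Q * (2 * (G.edgeFinset.card : ℝ))⁻¹ := by
          have h1 : ∀ g : V → W, (wgt G r pr r g) ^ (q g)
              = ((fun w => (G.degree w : ℝ) / (2 * G.edgeFinset.card)) (g r)) ^ (q g) :=
            fun g => by rw [wgt_r_eq]
          rw [Finset.prod_congr rfl fun g _ => h1 g]
          rw [prod_rpow_fiber r (fun w => (G.degree w : ℝ) / (2 * G.edgeFinset.card))
            (fun w => by positivity) q ?_]
          · have h2 : ∀ w : W, (∑ g : V → W, if g r = w then q g else 0)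
                = (G.degree w : ℝ) / (2 * G.edgeFinset.card) :=
              fun w => master_univ G r pr he N hprr hdec r w
            rw [Finset.prod_congr rfl fun w _ => by rw [h2 w]]
            have h3 : ∀ w : W,
                ((G.degree w : ℝ) / (2 * G.edgeFinset.card))
                    ^ ((G.degree w : ℝ) / (2 * G.edgeFinset.card))
                = (G.degree w : ℝ) ^ ((G.degree w : ℝ) / (2 * G.edgeFinset.card))
                  * ((2 * (G.edgeFinset.card : ℝ))⁻¹)
                      ^ ((G.degree w : ℝ) / (2 * G.edgeFinset.card)) := by
              intro w
              rw [div_eq_mul_inv, Real.mul_rpow (by positivity) (by positivity)]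
            rw [Finset.prod_congr rfl fun w _ => h3 w, Finset.prod_mul_distrib]
            congr 1
            rw [← rpow_sum' _ (by positivity) _ _, htsum, Real.rpow_one]
          · intro g hg
            have hw := Finset.prod_ne_zero_iff.mp hg r (Finset.mem_univ r)
            rw [wgt_r_eq] at hw
            exact hw
        have hother : ∀ v ∈ Finset.univ.erase r,
            (∏ g : V → W, (wgt G r pr v g) ^ (q g)) = Q⁻¹ := by
          intro v hv
          have hvr : v ≠ r := (Finset.mem_erase.mp hv).1
          have h1 : ∀ g : V → W, (wgt G r pr v g) ^ (q g)
              = ((fun w => ((G.degree w : ℝ))⁻¹) (g (pr v))) ^ (q g) := by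
            intro g
            by_cases hg : q g = 0
            · rw [hg, Real.rpow_zero, Real.rpow_zero]
            · have hw := Finset.prod_ne_zero_iff.mp hg v (Finset.mem_univ v)
              have hadj := wgt_adj G r pr hvr hw
              rw [wgt_ne_eq G r pr hvr, if_pos hadj]
          rw [Finset.prod_congr rfl fun g _ => h1 g]
          rw [prod_rpow_fiber (pr v) (fun w => ((G.degree w : ℝ))⁻¹)
            (fun w => by positivity) q ?_]
          · have h2 : ∀ w : W, (∑ g : V → W, if g (pr v) = w then q g else 0)
                = (G.degree w : ℝ) / (2 * G.edgeFinset.card) :=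
              fun w => master_univ G r pr he N hprr hdec (pr v) w
            rw [Finset.prod_congr rfl fun w _ => by rw [h2 w]]
            rw [← Finset.prod_inv_distrib]
            exact Finset.prod_congr rfl fun w _ => Real.inv_rpow (by positivity) _
          · intro g hg
            have hw := Finset.prod_ne_zero_iff.mp hg v (Finset.mem_univ v)
            have hadj := wgt_adj G r pr hvr hw
            have hd : 0 < G.degree (g (pr v)) :=
              (SimpleGraph.degree_pos_iff_exists_adj G _).mpr ⟨_, hadj⟩
            exact inv_ne_zero (Nat.cast_ne_zero.mpr hd.ne')
        rw [hroot, Finset.prod_congr rfl hother, Finset.prod_const,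
          Finset.card_erase_of_mem (Finset.mem_univ r), Finset.card_univ]

end

/-- The number of graph homomorphisms from `H` to `G`. -/
noncomputable def homCount {α β : Type*} (H : SimpleGraph α) (G : SimpleGraph β) : ℕ :=
  Nat.card (H →g G)

theorem stmt_7 {V W : Type*} [Fintype V] [Fintype W] [DecidableEq W]
    (T : SimpleGraph V) (hT : T.IsTree) (hm : 2 ≤ Fintype.card V)
    (G : SimpleGraph W) [DecidableRel G.Adj] (he : 1 ≤ G.edgeFinset.card) :
    (homCount T G : ℝ) ≥
      2 * G.edgeFinset.card *
        ((∏ w, (G.degree w : ℝ) ^ (G.degree w)) ^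
            ((2 * (G.edgeFinset.card : ℝ))⁻¹)) ^ (Fintype.card V - 2) := by
  classical
  obtain ⟨r, pr, N, hprr, hdec, hedge⟩ := tree_struct T hT
  have hdec' : ∀ v, v ≠ r → N (pr v) < N v := fun v hv => (hdec v hv).1
  have he' : 0 < G.edgeFinset.card := he
  have h2e : (0:ℝ) < 2 * G.edgeFinset.card := by positivity
  set q : (V → W) → ℝ := fun g => ∏ v, wgt G r pr v g with hq
  have hq0 : ∀ g, 0 ≤ q g := fun g => Finset.prod_nonneg fun v _ => wgt_nonneg G r pr v g
  set Q : ℝ := ∏ w, (G.degree w : ℝ) ^ ((G.degree w : ℝ) / (2 * G.edgeFinset.card)) with hQdef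
  have hQpos : 0 < Q := by
    refine Finset.prod_pos fun w _ => ?_
    rcases Nat.eq_zero_or_pos (G.degree w) with h | h
    · rw [h]
      norm_num
    · exact Real.rpow_pos_of_pos (by exact_mod_cast h) _
  -- the statement's constant equals Q
  have hCQ : ((∏ w, (G.degree w : ℝ) ^ (G.degree w)) ^ ((2 * (G.edgeFinset.card : ℝ))⁻¹)) = Q := by
    rw [hQdef, ← Real.finset_prod_rpow _ _ (fun w _ => by positivity) _]
    refine Finset.prod_congr rfl fun w _ => ?_
    rw [← Real.rpow_natCast ((G.degree w : ℝ)) (G.degree w), ← Real.rpow_mul (by positivity),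
      div_eq_mul_inv]
  -- AM-GM over the support of q
  set s : Finset (V → W) := Finset.univ.filter (fun g => q g ≠ 0) with hs
  have hsum_s : ∑ g ∈ s, q g = 1 := by
    rw [hs, Finset.sum_filter_ne_zero]
    exact master_total G r pr he' N hprr hdec'
  have hgm := Real.geom_mean_le_arith_mean_weighted s q (fun g => (q g)⁻¹)
    (fun g _ => hq0 g) hsum_s (fun g _ => inv_nonneg.mpr (hq0 g))
  have hRHS : ∑ g ∈ s, q g * (q g)⁻¹ = (s.card : ℝ) := by
    rw [Finset.sum_congr rfl fun g hg =>
      mul_inv_cancel₀ ((Finset.mem_filter.mp hg).2)]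
    simp only [Finset.sum_const, nsmul_eq_mul, mul_one]
    rfl
  have hLHS : ∏ g ∈ s, ((q g)⁻¹) ^ (q g) = (∏ g : V → W, (q g) ^ (q g))⁻¹ := by
    have h1 : ∀ g ∈ s, ((q g)⁻¹) ^ (q g) = ((q g) ^ (q g))⁻¹ :=
      fun g _ => Real.inv_rpow (hq0 g) _
    rw [Finset.prod_congr rfl h1, Finset.prod_inv_distrib]
    congr 1
    refine Finset.prod_subset (Finset.filter_subset _ _) fun g _ hg => ?_
    have : q g = 0 := by
      by_contra hc
      exact hg (Finset.mem_filter.mpr ⟨Finset.mem_univ g, hc⟩)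
    rw [this, Real.rpow_zero]
  -- entropy computation
  have hPval' : (∏ g : V → W, (q g) ^ (q g))
      = Q * (2 * (G.edgeFinset.card : ℝ))⁻¹ * (Q⁻¹) ^ (Fintype.card V - 1) :=
    entropy_prod G r pr he' N hprr hdec'
  have hPK : (∏ g : V → W, (q g) ^ (q g))
      * (2 * (G.edgeFinset.card : ℝ) * Q ^ (Fintype.card V - 2)) = 1 := by
    rw [hPval', show Fintype.card V - 1 = (Fintype.card V - 2) + 1 from by omega, inv_pow,
      pow_succ]
    have hrearr : Q * (2 * (G.edgeFinset.card : ℝ))⁻¹ * (Q ^ (Fintype.card V - 2) * Q)⁻¹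
        * (2 * (G.edgeFinset.card : ℝ) * Q ^ (Fintype.card V - 2))
      = (Q * Q⁻¹) * ((2 * (G.edgeFinset.card : ℝ))⁻¹ * (2 * (G.edgeFinset.card : ℝ)))
        * ((Q ^ (Fintype.card V - 2))⁻¹ * Q ^ (Fintype.card V - 2)) := by ring
    rw [hrearr, mul_inv_cancel₀ hQpos.ne', inv_mul_cancel₀ h2e.ne',
      inv_mul_cancel₀ (pow_ne_zero _ hQpos.ne')]
    norm_num
  have hPinv : 2 * (G.edgeFinset.card : ℝ) * Q ^ (Fintype.card V - 2)
      = (∏ g : V → W, (q g) ^ (q g))⁻¹ :=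
    eq_inv_of_mul_eq_one_left (by rw [mul_comm] at hPK; exact hPK)
  have hkey : 2 * (G.edgeFinset.card : ℝ) * Q ^ (Fintype.card V - 2) ≤ (s.card : ℝ) := by
    rw [hPinv, ← hLHS, ← hRHS]
    exact hgm
  -- homCount bound
  have hhom : s.card ≤ homCount T G := by
    have heqv : (T →g G) ≃ {g : V → W // ∀ a b, T.Adj a b → G.Adj (g a) (g b)} :=
      { toFun := fun f => ⟨f, fun a b h => f.map_adj h⟩
        invFun := fun p => ⟨p.1, fun h => p.2 _ _ h⟩
        left_inv := fun f => rfl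
        right_inv := fun p => rfl }
    rw [homCount, Nat.card_congr heqv, Nat.card_eq_fintype_card, Fintype.card_subtype]
    refine Finset.card_le_card fun g hg => ?_
    rw [Finset.mem_filter]
    refine ⟨Finset.mem_univ g, fun a b hab => ?_⟩
    have hqg : q g ≠ 0 := (Finset.mem_filter.mp hg).2
    have hadj : ∀ v, v ≠ r → G.Adj (g (pr v)) (g v) := by
      intro v hv
      exact wgt_adj G r pr hv (Finset.prod_ne_zero_iff.mp hqg v (Finset.mem_univ v))
    obtain ⟨v, hvr, hcase⟩ := hedge a b hab
    rcases hcase with ⟨h1, h2⟩ | ⟨h1, h2⟩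
    · have := hadj v hvr
      rw [h1, h2] at this
      exact this
    · have := hadj v hvr
      rw [h1, h2] at this
      exact this.symm
  rw [ge_iff_le, hCQ]
  calc 2 * (G.edgeFinset.card : ℝ) * Q ^ (Fintype.card V - 2)
      ≤ (s.card : ℝ) := hkey
    _ ≤ (homCount T G : ℝ) := by exact_mod_cast hhom
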